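/- Let θ ∈ (0,1) and let (x_i)_{i≥2} be a nonincreasing sequence of positive reals, only finitely many nonzero. Then ∑_{i≥2} x_i^θ ≥ (∑_{i≥2} x_i)^θ + (2 − 2^θ) ∑_{i≥3} x_i^θ. -/

import Mathlib

open Real

lemma key_ineq {θ a b : ℝ} (hθ : 0 < θ) (hθ1 : θ < 1) (hb : 0 ≤ b) (hba : b ≤ a) :
    (a + b) ^ θ ≤ a ^ θ + ((2 * b) ^ θ - b ^ θ) := by
  rcases eq_or_lt_of_le (hb.trans hba) with ha | ha
  · have hb0 : b = 0 := le_antisymm (hba.trans ha.symm.le) hb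
    simp [← ha, hb0, Real.zero_rpow hθ.ne']
  have hc := Real.concaveOn_rpow hθ.le hθ1.le
  set t := b / a with htdef
  have ht0 : 0 ≤ t := div_nonneg hb ha.le
  have ht1 : t ≤ 1 := (div_le_one ha).2 hba
  have hmem1 : b ∈ Set.Ici (0:ℝ) := hb
  have hmem2 : a + b ∈ Set.Ici (0:ℝ) := by simp; linarith
  have h1 := hc.2 hmem1 hmem2 ht0 (by linarith : (0:ℝ) ≤ 1 - t) (by ring)
  have h2 := hc.2 hmem1 hmem2 (by linarith : (0:ℝ) ≤ 1 - t) ht0 (by ring)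
  simp only [smul_eq_mul] at h1 h2
  have e1 : t * b + (1 - t) * (a + b) = a := by
    have hta : t * a = b := by rw [htdef]; exact div_mul_cancel₀ b ha.ne'
    linear_combination -hta
  have e2 : (1 - t) * b + t * (a + b) = 2 * b := by
    have hta : t * a = b := by rw [htdef]; exact div_mul_cancel₀ b ha.ne'
    linear_combination hta
  rw [e1] at h1
  rw [e2] at h2
  nlinarith [h1, h2]

theorem stmt2 (θ : ℝ) (hθ : 0 < θ) (hθ1 : θ < 1) (x : ℕ → ℝ)
    (hmono : Antitone x) (hpos : ∀ i, 0 ≤ x i)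
    (hfin : (Function.support x).Finite) :
    ∑ᶠ i, x i ^ θ ≥ (∑ᶠ i, x i) ^ θ + (2 - 2 ^ θ) * ∑ᶠ i, x (i + 1) ^ θ := by
  obtain ⟨n, hn⟩ : ∃ n, ∀ i, n ≤ i → x i = 0 := by
    refine ⟨hfin.toFinset.sup id + 1, fun i hi => ?_⟩
    by_contra h
    have : i ∈ hfin.toFinset := by simpa using h
    have := Finset.le_sup (f := id) this
    simp only [id] at this
    omega
  have hzero : ∀ i, n + 1 ≤ i → x i = 0 := fun i hi => hn i (by omega)
  have hsum1 : ∑ᶠ i, x i = ∑ i ∈ Finset.range (n + 1), x i := by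
    apply finsum_eq_sum_of_support_subset
    intro i hi
    simp only [Finset.coe_range, Set.mem_Iio]
    by_contra h
    exact hi (hn i (by omega))
  have hsum2 : ∑ᶠ i, x i ^ θ = ∑ i ∈ Finset.range (n + 1), x i ^ θ := by
    apply finsum_eq_sum_of_support_subset
    intro i hi
    simp only [Finset.coe_range, Set.mem_Iio]
    by_contra h
    exact hi (by simp [hn i (by omega), Real.zero_rpow hθ.ne'])
  have hsum3 : ∑ᶠ i, x (i + 1) ^ θ = ∑ i ∈ Finset.range n, x (i + 1) ^ θ := by
    apply finsum_eq_sum_of_support_subset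
    intro i hi
    simp only [Finset.coe_range, Set.mem_Iio]
    by_contra h
    exact hi (by simp [hn (i + 1) (by omega), Real.zero_rpow hθ.ne'])
  rw [hsum1, hsum2, hsum3]
  -- key induction
  have hx0 : ∀ m, x (m + 1) ≤ ∑ i ∈ Finset.range (m + 1), x i := by
    intro m
    calc x (m + 1) ≤ x 0 := hmono (Nat.zero_le _)
    _ ≤ ∑ i ∈ Finset.range (m + 1), x i := by
        apply Finset.single_le_sum (f := x) (fun i _ => hpos i)
        simp
  have key : ∀ m, (∑ i ∈ Finset.range (m + 1), x i) ^ θ ≤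
      x 0 ^ θ + (2 ^ θ - 1) * ∑ i ∈ Finset.range m, x (i + 1) ^ θ := by
    intro m
    induction m with
    | zero => simp
    | succ m ih =>
      rw [Finset.sum_range_succ (f := fun i => x (i + 1) ^ θ) m, Finset.sum_range_succ (f := x) (m + 1)]
      have hb : (0:ℝ) ≤ x (m + 1) := hpos _
      have hba : x (m + 1) ≤ ∑ i ∈ Finset.range (m + 1), x i := hx0 m
      have h := key_ineq hθ hθ1 hb hba
      have h2 : (2 * x (m + 1)) ^ θ = 2 ^ θ * x (m + 1) ^ θ :=
        Real.mul_rpow (by norm_num) hb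
      rw [h2] at h
      nlinarith [h, ih]
  have hshift : ∑ i ∈ Finset.range (n + 1), x i ^ θ =
      (∑ i ∈ Finset.range n, x (i + 1) ^ θ) + x 0 ^ θ :=
    Finset.sum_range_succ' (fun i => x i ^ θ) n
  rw [hshift]
  have hT : 0 ≤ ∑ i ∈ Finset.range n, x (i + 1) ^ θ :=
    Finset.sum_nonneg fun i _ => Real.rpow_nonneg (hpos _) _
  nlinarith [key n]
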